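/- Let f be a homeomorphism of a compact metric space (X,d). If f has the L-shadowing property, then f has the shadowing property. -/

import Mathlib

open Metric Filter Set

variable {X : Type*} [MetricSpace X]

/-- The iterate of a homeomorphism by an integer power. -/
def hIter (f : X ≃ₜ X) (k : ℤ) (x : X) : X := (f.toEquiv ^ k) x

/-- The local stable set of `x` of size `c`:
points whose forward iterates stay `c`-close to those of `x`. -/
def localStable (f : X ≃ₜ X) (c : ℝ) (x : X) : Set X :=
  {y | ∀ k : ℕ, dist ((⇑f)^[k] y) ((⇑f)^[k] x) ≤ c}

/-- The local unstable set of `x` of size `c`: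
points whose backward iterates stay `c`-close to those of `x`. -/
def localUnstable (f : X ≃ₜ X) (c : ℝ) (x : X) : Set X :=
  {y | ∀ k : ℕ, dist ((⇑f.symm)^[k] y) ((⇑f.symm)^[k] x) ≤ c}

/-- The stable set of `x`. -/
def stableSet (f : X ≃ₜ X) (x : X) : Set X :=
  {y | Tendsto (fun k : ℕ => dist ((⇑f)^[k] y) ((⇑f)^[k] x)) atTop (nhds 0)}

/-- The unstable set of `x`. -/
def unstableSet (f : X ≃ₜ X) (x : X) : Set X :=
  {y | Tendsto (fun k : ℕ => dist ((⇑f.symm)^[k] y) ((⇑f.symm)^[k] x)) atTop (nhds 0)}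

/-- `f` is positively `n`-expansive: for some `c > 0` every local stable set of
size `c` contains at most `n` points. -/
def PosNExpansive (f : X ≃ₜ X) (n : ℕ) : Prop :=
  ∃ c > 0, ∀ x : X, ∀ S : Finset X, ↑S ⊆ localStable f c x → S.card ≤ n

/-- `f` is `n`-expansive: for some `c > 0` every dynamical ball of size `c`
contains at most `n` points. -/
def NExpansive (f : X ≃ₜ X) (n : ℕ) : Prop :=
  ∃ c > 0, ∀ x : X, ∀ S : Finset X,
    ↑S ⊆ localStable f c x ∩ localUnstable f c x → S.card ≤ n

/-- `f` is expansive. -/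
def Expansive (f : X ≃ₜ X) : Prop :=
  ∃ c > 0, ∀ x y : X, (∀ k : ℤ, dist (hIter f k x) (hIter f k y) ≤ c) → x = y

/-- `(x_k)_{k ∈ ℤ}` is a `δ`-pseudo-orbit. -/
def IsPseudoOrbit (f : X ≃ₜ X) (δ : ℝ) (x : ℤ → X) : Prop :=
  ∀ k : ℤ, dist (f (x k)) (x (k + 1)) < δ

/-- `(x_k)_{k ∈ ℤ}` is a two-sided limit pseudo-orbit:
`d(f(x_k), x_{k+1}) → 0` as `|k| → ∞`. -/
def IsTwoSidedLimitPseudoOrbit (f : X ≃ₜ X) (x : ℤ → X) : Prop :=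
  Tendsto (fun k : ℤ => dist (f (x k)) (x (k + 1))) cofinite (nhds 0)

/-- `z` `ε`-shadows the sequence `(x_k)_{k ∈ ℤ}`. -/
def Shadows (f : X ≃ₜ X) (ε : ℝ) (z : X) (x : ℤ → X) : Prop :=
  ∀ k : ℤ, dist (hIter f k z) (x k) < ε

/-- `z` two-sided limit shadows `(x_k)_{k ∈ ℤ}`. -/
def TwoSidedLimitShadows (f : X ≃ₜ X) (z : X) (x : ℤ → X) : Prop :=
  Tendsto (fun k : ℤ => dist (hIter f k z) (x k)) cofinite (nhds 0)

/-- The shadowing property. -/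
def ShadowingProperty (f : X ≃ₜ X) : Prop :=
  ∀ ε > 0, ∃ δ > 0, ∀ x : ℤ → X, IsPseudoOrbit f δ x → ∃ z : X, Shadows f ε z x

/-- The L-shadowing property. -/
def LShadowingProperty (f : X ≃ₜ X) : Prop :=
  ∀ ε > 0, ∃ δ > 0, ∀ x : ℤ → X, IsPseudoOrbit f δ x →
    IsTwoSidedLimitPseudoOrbit f x →
    ∃ z : X, Shadows f ε z x ∧ TwoSidedLimitShadows f z x

/-- Topological transitivity. -/
def TopTransitive (f : X ≃ₜ X) : Prop :=
  ∀ U V : Set X, IsOpen U → IsOpen V → U.Nonempty → V.Nonempty →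
    ∃ k : ℕ, ((⇑f)^[k] '' U ∩ V).Nonempty

/-- There is a nontrivial finite `ε`-pseudo-orbit from `x` to `y`. -/
def ChainFrom (f : X ≃ₜ X) (ε : ℝ) (x y : X) : Prop :=
  ∃ (l : ℕ) (c : ℕ → X), 0 < l ∧ c 0 = x ∧ c l = y ∧
    ∀ k < l, dist (f (c k)) (c (k + 1)) < ε

/-- `x` is a chain recurrent point of `f`. -/
def ChainRecurrent (f : X ≃ₜ X) (x : X) : Prop :=
  ∀ ε > 0, ChainFrom f ε x x

/-- The chain recurrent class of `x`. -/
def chainClass (f : X ≃ₜ X) (x : X) : Set X :=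
  {y | ∀ ε > 0, ChainFrom f ε x y ∧ ChainFrom f ε y x}

/-- `x` is a periodic point of `f`. -/
def Periodic (f : X ≃ₜ X) (x : X) : Prop :=
  ∃ k : ℕ, 1 ≤ k ∧ (⇑f)^[k] x = x

/-- `x` is a non-wandering point of `f`. -/
def NonWandering (f : X ≃ₜ X) (x : X) : Prop :=
  ∀ U : Set X, IsOpen U → x ∈ U → ∃ k : ℕ, 0 < k ∧ ((⇑f)^[k] '' U ∩ U).Nonempty

/-- The omega limit set of `x`: accumulation points of the forward orbit. -/
def omegaLimitSet (f : X ≃ₜ X) (x : X) : Set X :=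
  {y | ∃ φ : ℕ → ℕ, StrictMono φ ∧ Tendsto (fun n => (⇑f)^[φ n] x) atTop (nhds y)}

/-- `z` two-sided limit shadows `(x_k)` with gap `K`. -/
def TwoSidedLimitShadowsWithGap (f : X ≃ₜ X) (K : ℤ) (z : X) (x : ℤ → X) : Prop :=
  Tendsto (fun k : ℤ => dist (hIter f k z) (x k)) atBot (nhds 0) ∧
  Tendsto (fun k : ℤ => dist (hIter f (K + k) z) (x k)) atTop (nhds 0)

lemma hIter_zero' (f : X ≃ₜ X) (x : X) : hIter f 0 x = x := by
  simp [hIter]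

lemma hIter_add_one' (f : X ≃ₜ X) (k : ℤ) (x : X) :
    hIter f (k + 1) x = f (hIter f k x) := by
  show (f.toEquiv ^ (k + 1)) x = f ((f.toEquiv ^ k) x)
  rw [add_comm, zpow_add, zpow_one, Equiv.Perm.mul_apply]
  rfl

lemma hIter_sub_one' (f : X ≃ₜ X) (k : ℤ) (x : X) :
    hIter f (k - 1) x = f.symm (hIter f k x) := by
  show (f.toEquiv ^ (k - 1)) x = f.symm ((f.toEquiv ^ k) x)
  rw [sub_eq_neg_add, zpow_add, Equiv.Perm.mul_apply, zpow_neg, zpow_one]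
  rfl

lemma continuous_hIter' (f : X ≃ₜ X) (k : ℤ) : Continuous (hIter f k) := by
  induction k using Int.induction_on with
  | zero => simpa [funext fun x => hIter_zero' f x] using continuous_id'
  | succ n ih =>
      have : hIter f ((n : ℤ) + 1) = fun x => f (hIter f n x) :=
        funext fun x => hIter_add_one' f n x
      rw [this]; exact f.continuous.comp ih
  | pred n ih =>
      have : hIter f (-(n : ℤ) - 1) = fun x => f.symm (hIter f (-n) x) :=
        funext fun x => hIter_sub_one' f (-n) x
      rw [this]; exact f.symm.continuous.comp ih

/-- Extension of a pseudo-orbit: agrees with `x` on `[-n, n]`, genuine orbit outside. -/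
def extSeq' (f : X ≃ₜ X) (x : ℤ → X) (n : ℕ) (k : ℤ) : X :=
  if k < -(n : ℤ) then hIter f (k + n) (x (-(n : ℤ)))
  else if (n : ℤ) < k then hIter f (k - n) (x n)
  else x k

lemma extSeq'_of_le (f : X ≃ₜ X) (x : ℤ → X) (n : ℕ) {k : ℤ} (h : k ≤ -(n : ℤ)) :
    extSeq' f x n k = hIter f (k + n) (x (-(n : ℤ))) := by
  rcases lt_or_eq_of_le h with h' | h'
  · simp [extSeq', h']
  · subst h'
    have h1 : ¬ (-(n : ℤ) < -(n : ℤ)) := lt_irrefl _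
    have h2 : ¬ ((n : ℤ) < -(n : ℤ)) := not_lt.2 (neg_le_self n.cast_nonneg)
    simp [extSeq', h1, h2, hIter_zero']

lemma extSeq'_of_ge (f : X ≃ₜ X) (x : ℤ → X) (n : ℕ) {k : ℤ} (h : (n : ℤ) ≤ k) :
    extSeq' f x n k = hIter f (k - n) (x n) := by
  have h0 : ¬ (k < -(n : ℤ)) := not_lt.2 (le_trans (neg_le_self n.cast_nonneg) h)
  rcases lt_or_eq_of_le h with h' | h'
  · simp [extSeq', h0, h']
  · subst h'
    simp [extSeq', h0, hIter_zero']

lemma extSeq'_of_mem (f : X ≃ₜ X) (x : ℤ → X) (n : ℕ) {k : ℤ}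
    (h1 : -(n : ℤ) ≤ k) (h2 : k ≤ (n : ℤ)) : extSeq' f x n k = x k := by
  simp [extSeq', not_lt.2 h1, not_lt.2 h2]

theorem stmt8 {X : Type*} [MetricSpace X] [CompactSpace X] (f : X ≃ₜ X)
    (hL : LShadowingProperty f) :
    ShadowingProperty f := by
  intro ε hε
  obtain ⟨δ, hδ0, hδ⟩ := hL (ε / 2) (half_pos hε)
  refine ⟨δ, hδ0, fun x hx => ?_⟩
  -- the extensions are pseudo-orbits
  have hpo : ∀ n : ℕ, IsPseudoOrbit f δ (extSeq' f x n) := by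
    intro n k
    rcases lt_or_ge k (-(n : ℤ)) with hk | hk
    · rw [extSeq'_of_le f x n hk.le, extSeq'_of_le f x n (by omega),
        ← hIter_add_one' f (k + n)]
      have : k + 1 + (n : ℤ) = k + n + 1 := by ring
      rw [this, dist_self]; exact hδ0
    · rcases lt_or_ge k (n : ℤ) with hk2 | hk2
      · rw [extSeq'_of_mem f x n hk hk2.le, extSeq'_of_mem f x n (by omega) (by omega)]
        exact hx k
      · rw [extSeq'_of_ge f x n hk2, extSeq'_of_ge f x n (by omega),
          ← hIter_add_one' f (k - n)]
        have : k + 1 - (n : ℤ) = k - n + 1 := by ring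
        rw [this, dist_self]; exact hδ0
  -- the extensions are two-sided limit pseudo-orbits
  have hlim : ∀ n : ℕ, IsTwoSidedLimitPseudoOrbit f (extSeq' f x n) := by
    intro n
    have hev : (fun k : ℤ => dist (f (extSeq' f x n k)) (extSeq' f x n (k + 1)))
        =ᶠ[cofinite] fun _ => (0 : ℝ) := by
      rw [Filter.eventuallyEq_iff_exists_mem]
      refine ⟨{k : ℤ | k < -(n : ℤ) ∨ (n : ℤ) ≤ k}, ?_, ?_⟩
      · rw [Filter.mem_cofinite]
        apply Set.Finite.subset (Set.finite_Icc (-(n : ℤ)) (n : ℤ))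
        intro k hk
        simp only [Set.mem_compl_iff, Set.mem_setOf_eq, not_or, not_lt] at hk
        exact Set.mem_Icc.2 ⟨hk.1, le_of_lt (lt_of_not_ge fun h => hk.2 h)⟩
      · intro k hk
        show dist (f (extSeq' f x n k)) (extSeq' f x n (k + 1)) = 0
        rcases hk with hk | hk
        · rw [extSeq'_of_le f x n hk.le, extSeq'_of_le f x n (by omega),
            ← hIter_add_one' f (k + n)]
          have : k + 1 + (n : ℤ) = k + n + 1 := by ring
          rw [this, dist_self]
        · rw [extSeq'_of_ge f x n hk, extSeq'_of_ge f x n (by omega),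
            ← hIter_add_one' f (k - n)]
          have : k + 1 - (n : ℤ) = k - n + 1 := by ring
          rw [this, dist_self]
    exact (tendsto_const_nhds : Tendsto (fun _ : ℤ => (0:ℝ)) cofinite (nhds 0)).congr' hev.symm
  -- pick shadowing points
  have hz : ∀ n : ℕ, ∃ z : X, Shadows f (ε / 2) z (extSeq' f x n) := by
    intro n
    obtain ⟨z, hz1, _⟩ := hδ (extSeq' f x n) (hpo n) (hlim n)
    exact ⟨z, hz1⟩
  choose zs hzs using hz
  -- extract a convergent subsequence
  obtain ⟨z, -, φ, hφ, hzt⟩ := isCompact_univ.tendsto_subseq (fun n => Set.mem_univ (zs n))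
  refine ⟨z, fun k => ?_⟩
  have hk : ∀ n : ℕ, |k| ≤ (n : ℤ) → dist (hIter f k (zs n)) (x k) < ε / 2 := by
    intro n hn
    obtain ⟨h1, h2⟩ := abs_le.1 hn
    have := hzs n k
    rwa [extSeq'_of_mem f x n h1 h2] at this
  have htend : Tendsto (fun n => dist (hIter f k (zs (φ n))) (x k)) atTop
      (nhds (dist (hIter f k z) (x k))) := by
    exact (((continuous_hIter' f k).tendsto z).comp hzt).dist tendsto_const_nhds
  have hev : ∀ᶠ n in atTop, dist (hIter f k (zs (φ n))) (x k) ≤ ε / 2 := by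
    filter_upwards [Filter.eventually_ge_atTop (|k|).toNat] with n hn
    refine (hk (φ n) ?_).le
    have h1 : (n : ℤ) ≤ (φ n : ℤ) := by exact_mod_cast hφ.le_apply
    have h2 : ((|k|).toNat : ℤ) ≤ (n : ℤ) := by exact_mod_cast hn
    have h3 : |k| ≤ ((|k|).toNat : ℤ) := Int.self_le_toNat _
    exact h3.trans (h2.trans h1)
  have hle : dist (hIter f k z) (x k) ≤ ε / 2 := le_of_tendsto htend hev
  linarith
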